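/- Suppose z* = (x*, y*) satisfies g_j(x*) < 0 for every j ∈ N and y*_j > 0 for every j ∈ B_a, suppose the radius of active-set stability δ_G is finite, and let δ_A be the unique fixed point of Δ. Then for every θ ∈ (0, 1) and every z = (x, y) with ‖z − z*‖_P ≤ θ·δ_A: −g_j(x) ≥ (1 − θ)·L̄ˣ_j(δ_A)·δ_A for every j ∈ N, and y_j ≥ (1 − θ)·L̄ʸ_j(δ_A)·δ_A for every j ∈ B_a. In particular, every z = (x, y) with ‖z − z*‖_P < δ_A satisfies g_j(x) < 0 for every j ∈ N and y_j > 0 for every j ∈ B_a. -/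

import Mathlib

noncomputable section

open scoped ENNReal
open Classical Filter Topology

/-- The primal-dual space ℝⁿ × ℝᵐ with the Euclidean norm. -/
abbrev Zsp (n m : ℕ) := EuclideanSpace ℝ (Fin n ⊕ Fin m)

/-- The primal (x-) part of a primal-dual point. -/
def xPart {n m : ℕ} (z : Zsp n m) : Fin n → ℝ := fun i => z (Sum.inl i)

/-- The dual (y-) part of a primal-dual point. -/
def yPart {n m : ℕ} (z : Zsp n m) : Fin m → ℝ := fun j => z (Sum.inr j)

/-- Convex subdifferential of `φ : ℝⁿ → ℝ` at `x`. -/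
def subdiff {n : ℕ} (φ : (Fin n → ℝ) → ℝ) (x : Fin n → ℝ) : Set (Fin n → ℝ) :=
  {u | ∀ w, φ x + ∑ i, u i * (w i - x i) ≤ φ w}

/-- Normal cone to the nonnegative orthant ℝᵐ₊ at `y`. -/
def normalConePos {m : ℕ} (y : Fin m → ℝ) : Set (Fin m → ℝ) :=
  {v | ∀ w : Fin m → ℝ, (∀ j, 0 ≤ w j) → ∑ j, v j * (w j - y j) ≤ 0}

/-- The saddle subdifferential F(z); empty unless the dual part is nonnegative. -/
def saddleF {n m : ℕ} (f : (Fin n → ℝ) → ℝ) (g : Fin m → (Fin n → ℝ) → ℝ)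
    (z : Zsp n m) : Set (Zsp n m) :=
  {uv | (∀ j, 0 ≤ yPart z j) ∧
    (∃ a ∈ subdiff f (xPart z), ∃ b : Fin m → Fin n → ℝ,
        (∀ j, b j ∈ subdiff (g j) (xPart z)) ∧
        ∀ i, xPart uv i = a i + ∑ j, yPart z j * b j i) ∧
    (∃ v ∈ normalConePos (yPart z), ∀ j, yPart uv j = -(g j (xPart z)) + v j)}

/-- The primal-dual solution set S* = {z : 0 ∈ F(z)}. -/
def Sstar {n m : ℕ} (f : (Fin n → ℝ) → ℝ) (g : Fin m → (Fin n → ℝ) → ℝ) :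
    Set (Zsp n m) := {z | (0 : Zsp n m) ∈ saddleF f g z}

/-- A primal-dual point regarded as a plain vector indexed by `Fin n ⊕ Fin m`. -/
def toVec {n m : ℕ} (z : Zsp n m) : (Fin n ⊕ Fin m) → ℝ := fun i => z i

/-- The P-seminorm ‖z‖_P = √(zᵀ P z). -/
def pnorm {n m : ℕ} (P : Matrix (Fin n ⊕ Fin m) (Fin n ⊕ Fin m) ℝ) (z : Zsp n m) : ℝ :=
  Real.sqrt (dotProduct (toVec z) (P.mulVec (toVec z)))

/-- P-distance from a point to a set. -/
def distP {n m : ℕ} (P : Matrix (Fin n ⊕ Fin m) (Fin n ⊕ Fin m) ℝ) (z : Zsp n m)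
    (S : Set (Zsp n m)) : ℝ := sInf ((fun w => pnorm P (z - w)) '' S)

/-- ℝ≥0∞-valued Q-seminorm distance from the origin to a set (equal to ⊤ on ∅). -/
def edistQ {n m : ℕ} (Q : Matrix (Fin n ⊕ Fin m) (Fin n ⊕ Fin m) ℝ)
    (A : Set (Zsp n m)) : ℝ≥0∞ := ⨅ w ∈ A, ENNReal.ofReal (pnorm Q w)

/-- Metric subregularity of the saddle subdifferential near the solution set. -/
def MetricSubregular {n m : ℕ} (f : (Fin n → ℝ) → ℝ)
    (g : Fin m → (Fin n → ℝ) → ℝ) : Prop :=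
  ∀ t > (0:ℝ), ∃ α > (0:ℝ), ∀ z : Zsp n m, Metric.infDist z (Sstar f g) ≤ t →
    ENNReal.ofReal (α * Metric.infDist z (Sstar f g)) ≤
      EMetric.infEdist (0 : Zsp n m) (saddleF f g z)

/-- `l` is the largest eigenvalue of `P`. -/
def IsMaxEigen {ι : Type*} [Fintype ι] (P : Matrix ι ι ℝ) (l : ℝ) : Prop :=
  (∃ v : ι → ℝ, v ≠ 0 ∧ P.mulVec v = l • v) ∧
  ∀ (μ : ℝ) (v : ι → ℝ), v ≠ 0 → P.mulVec v = μ • v → μ ≤ l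

/-- The global metric subregularity modulus α_G over the τ-neighborhood of S*. -/
def alphaG {n m : ℕ} (f : (Fin n → ℝ) → ℝ) (g : Fin m → (Fin n → ℝ) → ℝ) (τ : ℝ) : ℝ :=
  sInf {r : ℝ | ∃ z : Zsp n m, Metric.infDist z (Sstar f g) ≤ τ ∧
    0 < Metric.infDist z (Sstar f g) ∧ (saddleF f g z).Nonempty ∧
    r = Metric.infDist (0 : Zsp n m) (saddleF f g z) / Metric.infDist z (Sstar f g)}

/-- The optimal primal Lipschitz modulus L̄ˣ_j(t) on the P-ball of radius t around z*. -/
def Lxbar {n m : ℕ} (g : Fin m → (Fin n → ℝ) → ℝ)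
    (P : Matrix (Fin n ⊕ Fin m) (Fin n ⊕ Fin m) ℝ) (zstar : Zsp n m)
    (j : Fin m) (t : ℝ) : ℝ :=
  sSup {r : ℝ | ∃ w : Zsp n m, 0 < pnorm P (w - zstar) ∧ pnorm P (w - zstar) ≤ t ∧
    r = max (g j (xPart w) - g j (xPart zstar)) 0 / pnorm P (w - zstar)}

/-- The optimal dual Lipschitz modulus L̄ʸ_j(t) on the P-ball of radius t around z*. -/
def Lybar {n m : ℕ} (P : Matrix (Fin n ⊕ Fin m) (Fin n ⊕ Fin m) ℝ) (zstar : Zsp n m)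
    (j : Fin m) (t : ℝ) : ℝ :=
  sSup {r : ℝ | ∃ w : Zsp n m, 0 < pnorm P (w - zstar) ∧ pnorm P (w - zstar) ≤ t ∧
    r = max (yPart zstar j - yPart w j) 0 / pnorm P (w - zstar)}

/-- The set of radii of active-set stability around z*. -/
def stabSet {n m : ℕ} (g : Fin m → (Fin n → ℝ) → ℝ)
    (P : Matrix (Fin n ⊕ Fin m) (Fin n ⊕ Fin m) ℝ) (zstar : Zsp n m) : Set ℝ :=
  {t : ℝ | 0 < t ∧ ∀ w : Zsp n m, pnorm P (w - zstar) < t →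
    (∀ j, g j (xPart zstar) < 0 → g j (xPart w) < 0) ∧
    (∀ j, g j (xPart zstar) = 0 → 0 < yPart zstar j → 0 < yPart w j)}

/-- The radius of active-set stability δ. -/
def deltaG {n m : ℕ} (g : Fin m → (Fin n → ℝ) → ℝ)
    (P : Matrix (Fin n ⊕ Fin m) (Fin n ⊕ Fin m) ℝ) (zstar : Zsp n m) : ℝ :=
  sSup (stabSet g P zstar)

/-- The identifiable set M associated with the limit solution z*. -/
def Mset {n m : ℕ} (g : Fin m → (Fin n → ℝ) → ℝ) (zstar : Zsp n m) :
    Set (Zsp n m) :=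
  {w | (∀ j, 0 ≤ yPart w j) ∧
    (∀ j, g j (xPart zstar) < 0 → g j (xPart w) < 0 ∧ yPart w j = 0) ∧
    (∀ j, g j (xPart zstar) = 0 → 0 < yPart zstar j → 0 < yPart w j)}

/-- The dual function h(y) = inf_x (f(x) + ⟨y, G(x)⟩), with values in EReal. -/
def hdualFn {n m : ℕ} (f : (Fin n → ℝ) → ℝ) (g : Fin m → (Fin n → ℝ) → ℝ)
    (y : Fin m → ℝ) : EReal :=
  ⨅ x : Fin n → ℝ, ((f x + ∑ j, y j * g j x : ℝ) : EReal)

/-- The solution set S*_L of the reduced system (only constraints indexed by B). -/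
def SstarL {n m : ℕ} (f : (Fin n → ℝ) → ℝ) (g : Fin m → (Fin n → ℝ) → ℝ)
    (zstar : Zsp n m) : Set (Zsp n m) :=
  {z | ((f (xPart z) : ℝ) : EReal) ≤ hdualFn f g (yPart z) ∧
    (∀ j, g j (xPart zstar) = 0 → g j (xPart z) ≤ 0) ∧
    ∀ j, 0 ≤ yPart z j}

/-- The local metric subregularity modulus α_L. -/
def alphaL {n m : ℕ} (f : (Fin n → ℝ) → ℝ) (g : Fin m → (Fin n → ℝ) → ℝ)
    (zstar : Zsp n m) (τ : ℝ) : ℝ :=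
  sInf {r : ℝ | ∃ z : Zsp n m, Metric.infDist z (Sstar f g) ≤ τ ∧
    0 < Metric.infDist z (SstarL f g zstar) ∧ (saddleF f g z).Nonempty ∧
    r = Metric.infDist (0 : Zsp n m) (saddleF f g z) /
      Metric.infDist z (SstarL f g zstar)}

/-- The restricted metric subregularity modulus α_M over M ∩ B_P(z*, δ/2). -/
def alphaM {n m : ℕ} (f : (Fin n → ℝ) → ℝ) (g : Fin m → (Fin n → ℝ) → ℝ)
    (P : Matrix (Fin n ⊕ Fin m) (Fin n ⊕ Fin m) ℝ) (zstar : Zsp n m)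
    (τ δ : ℝ) : ℝ :=
  sInf {r : ℝ | ∃ z : Zsp n m, Metric.infDist z (Sstar f g) ≤ τ ∧
    pnorm P (z - zstar) < δ / 2 ∧ z ∈ Mset g zstar ∧
    0 < Metric.infDist z (Sstar f g) ∧ (saddleF f g z).Nonempty ∧
    r = Metric.infDist (0 : Zsp n m) (saddleF f g z) /
      Metric.infDist z (Sstar f g)}

/-- The function Δ, with values in ℝ≥0∞ (conventions: a/0 = ∞ for a > 0, inf ∅ = ∞). -/
def DeltaFn {n m : ℕ} (g : Fin m → (Fin n → ℝ) → ℝ)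
    (P : Matrix (Fin n ⊕ Fin m) (Fin n ⊕ Fin m) ℝ) (zstar : Zsp n m)
    (t : ℝ) : ℝ≥0∞ :=
  min
    (⨅ j ∈ {j : Fin m | g j (xPart zstar) < 0},
      ENNReal.ofReal (-(g j (xPart zstar))) / ENNReal.ofReal (Lxbar g P zstar j t))
    (⨅ j ∈ {j : Fin m | g j (xPart zstar) = 0 ∧ 0 < yPart zstar j},
      ENNReal.ofReal (yPart zstar j) / ENNReal.ofReal (Lybar P zstar j t))

lemma pnorm_nonneg' {n m : ℕ} (P : Matrix (Fin n ⊕ Fin m) (Fin n ⊕ Fin m) ℝ)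
    (z : Zsp n m) : 0 ≤ pnorm P z := Real.sqrt_nonneg _

lemma coord_abs_le_norm {n m : ℕ} (z : Zsp n m) (i : Fin n ⊕ Fin m) : |z i| ≤ ‖z‖ := by
  rw [EuclideanSpace.norm_eq]
  calc |z i| = Real.sqrt (|z i| ^ 2) := (Real.sqrt_sq (abs_nonneg _)).symm
    _ ≤ Real.sqrt (∑ k, ‖z k‖ ^ 2) := by
        apply Real.sqrt_le_sqrt
        have := Finset.single_le_sum (f := fun k => ‖z k‖ ^ 2)
          (fun k _ => by positivity) (Finset.mem_univ i)
        simpa [Real.norm_eq_abs] using this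

lemma pnorm_lower {n m : ℕ} (hn : 0 < n)
    (P : Matrix (Fin n ⊕ Fin m) (Fin n ⊕ Fin m) ℝ) (hP : P.PosDef) :
    ∃ c > 0, ∀ z : Zsp n m, c * ‖z‖ ≤ pnorm P z := by
  classical
  set q : Zsp n m → ℝ := fun z => dotProduct (toVec z) (P.mulVec (toVec z)) with hq
  have hqformula : q = fun z : Zsp n m => ∑ i, z i * ∑ k, P i k * z k := rfl
  have h1 : ∀ i : Fin n ⊕ Fin m, Continuous fun z : Zsp n m => z i := fun i =>
    (continuous_apply i).comp (PiLp.continuous_ofLp 2 fun _ : Fin n ⊕ Fin m => ℝ)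
  have hcont : Continuous q := by
    rw [hqformula]
    exact continuous_finset_sum _ fun i _ =>
      (h1 i).mul (continuous_finset_sum _ fun k _ => continuous_const.mul (h1 k))
  have hqpos : ∀ z : Zsp n m, z ≠ 0 → 0 < q z := by
    intro z hz
    have hv : toVec z ≠ 0 := fun h => hz (by ext i; simpa [toVec] using congrFun h i)
    have := hP.dotProduct_mulVec_pos hv
    simpa [star_trivial] using this
  have hsmul : ∀ (t : ℝ) (v : Zsp n m), q (t • v) = t * t * q v := by
    intro t v
    have hv : toVec (t • v) = t • toVec v := rfl
    simp only [hq, hv, Matrix.mulVec_smul, smul_dotProduct, dotProduct_smul,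
      smul_eq_mul]
    ring
  have hsne : (Metric.sphere (0 : Zsp n m) 1).Nonempty := by
    refine ⟨EuclideanSpace.single (Sum.inl ⟨0, hn⟩) (1 : ℝ), ?_⟩
    simp [mem_sphere_zero_iff_norm, EuclideanSpace.norm_single]
  obtain ⟨z₀, hz₀, hmin⟩ := (isCompact_sphere (0 : Zsp n m) 1).exists_isMinOn hsne
    hcont.continuousOn
  have hz₀n : ‖z₀‖ = 1 := mem_sphere_zero_iff_norm.mp hz₀
  have hμ : 0 < q z₀ := hqpos z₀ (by intro h; rw [h] at hz₀n; simp at hz₀n)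
  refine ⟨Real.sqrt (q z₀), Real.sqrt_pos.mpr hμ, fun z => ?_⟩
  rcases eq_or_ne z 0 with rfl | hz
  · simpa using pnorm_nonneg' P 0
  · have ht : (0 : ℝ) < ‖z‖ := norm_pos_iff.mpr hz
    have hu : (‖z‖⁻¹ • z) ∈ Metric.sphere (0 : Zsp n m) 1 := by
      rw [mem_sphere_zero_iff_norm, norm_smul, norm_inv, norm_norm, inv_mul_cancel₀ ht.ne']
    have h2 : q z₀ ≤ q (‖z‖⁻¹ • z) := hmin hu
    have h3 : q (‖z‖⁻¹ • z) = ‖z‖⁻¹ * ‖z‖⁻¹ * q z := hsmul _ _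
    rw [h3] at h2
    have h5 := mul_le_mul_of_nonneg_right h2 (mul_nonneg ht.le ht.le)
    have h6 : ‖z‖⁻¹ * ‖z‖⁻¹ * q z * (‖z‖ * ‖z‖) = q z := by field_simp
    have h4 : q z₀ * (‖z‖ * ‖z‖) ≤ q z := by rw [h6] at h5; exact h5
    have h7 : Real.sqrt (q z₀) * ‖z‖ = Real.sqrt (q z₀ * (‖z‖ * ‖z‖)) := by
      rw [Real.sqrt_mul hμ.le, Real.sqrt_mul_self ht.le]
    rw [h7]
    exact Real.sqrt_le_sqrt h4

lemma convexOn_lipschitz_ball {n : ℕ} {φ : (Fin n → ℝ) → ℝ} (hφ : ConvexOn ℝ Set.univ φ)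
    (x0 : Fin n → ℝ) (R : ℝ) :
    ∃ K : NNReal, ∀ x ∈ Metric.closedBall x0 R, φ x - φ x0 ≤ K * ‖x - x0‖ := by
  have hball : ConvexOn ℝ (Metric.ball x0 (R + 2)) φ :=
    hφ.subset (Set.subset_univ _) (convex_ball _ _)
  have hcont : Continuous φ := hφ.locallyLipschitz.continuous
  have hbdd : Bornology.IsBounded (φ '' Metric.ball x0 (R + 2)) := by
    refine (((isCompact_closedBall x0 (R + 2)).image hcont).isBounded).subset ?_
    exact Set.image_mono Metric.ball_subset_closedBall
  obtain ⟨K, hK⟩ := hball.exists_lipschitzOnWith_of_isBounded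
    (show R + 1 < R + 2 by linarith) hbdd
  refine ⟨K, fun x hx => ?_⟩
  have hRnn : 0 ≤ R := le_trans dist_nonneg (Metric.mem_closedBall.mp hx)
  have hx' : x ∈ Metric.ball x0 (R + 1) := by
    rw [Metric.mem_ball]
    exact lt_of_le_of_lt (Metric.mem_closedBall.mp hx) (by linarith)
  have hx0 : x0 ∈ Metric.ball x0 (R + 1) := by
    rw [Metric.mem_ball, dist_self]; linarith
  have hd := hK.dist_le_mul x hx' x0 hx0
  rw [dist_eq_norm] at hd
  calc φ x - φ x0 ≤ |φ x - φ x0| := le_abs_self _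
    _ = dist (φ x) (φ x0) := (Real.dist_eq _ _).symm
    _ ≤ K * ‖x - x0‖ := hd

/-- Claim: quantitative margins inside the δ_A-ball. -/
theorem stmt14
    (n m : ℕ) (hn : 0 < n) (hm : 0 < m)
    (f : (Fin n → ℝ) → ℝ) (g : Fin m → (Fin n → ℝ) → ℝ)
    (hf : ConvexOn ℝ Set.univ f) (hg : ∀ j, ConvexOn ℝ Set.univ (g j))
    (P : Matrix (Fin n ⊕ Fin m) (Fin n ⊕ Fin m) ℝ) (hP : P.PosDef)
    (zstar : Zsp n m)
    -- δ_G is finite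
    (hδfin : BddAbove (stabSet g P zstar))
    (δA : ℝ) (hδA : 0 < δA) (hfix : DeltaFn g P zstar δA = ENNReal.ofReal δA) :
    (∀ θ : ℝ, 0 < θ → θ < 1 → ∀ w : Zsp n m, pnorm P (w - zstar) ≤ θ * δA →
      (∀ j : Fin m, g j (xPart zstar) < 0 →
        (1 - θ) * Lxbar g P zstar j δA * δA ≤ -(g j (xPart w))) ∧
      (∀ j : Fin m, g j (xPart zstar) = 0 → 0 < yPart zstar j →
        (1 - θ) * Lybar P zstar j δA * δA ≤ yPart w j)) ∧
    (∀ w : Zsp n m, pnorm P (w - zstar) < δA →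
      (∀ j : Fin m, g j (xPart zstar) < 0 → g j (xPart w) < 0) ∧
      (∀ j : Fin m, g j (xPart zstar) = 0 → 0 < yPart zstar j → 0 < yPart w j)) := by
  obtain ⟨c, hc, hcle⟩ := pnorm_lower hn P hP
  set x0 := xPart zstar with hx0def
  -- norm comparison
  have hcomp : ∀ w : Zsp n m, ‖w - zstar‖ ≤ pnorm P (w - zstar) / c := fun w =>
    (le_div_iff₀' hc).mpr (hcle _)
  have heqz : ∀ w : Zsp n m, pnorm P (w - zstar) = 0 → w = zstar := by
    intro w h
    have h1 : c * ‖w - zstar‖ ≤ 0 := h ▸ hcle (w - zstar)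
    have h2 : ‖w - zstar‖ ≤ 0 := by nlinarith [norm_nonneg (w - zstar)]
    exact sub_eq_zero.mp (norm_eq_zero.mp (le_antisymm h2 (norm_nonneg _)))
  have hxpart : ∀ w : Zsp n m, ‖xPart w - x0‖ ≤ ‖w - zstar‖ := by
    intro w
    refine (pi_norm_le_iff_of_nonneg (norm_nonneg _)).mpr fun i => ?_
    have h1 : (xPart w - x0) i = (w - zstar) (Sum.inl i) := rfl
    rw [h1, Real.norm_eq_abs]
    exact coord_abs_le_norm (w - zstar) (Sum.inl i)
  have hypart : ∀ (w : Zsp n m) (j : Fin m),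
      yPart zstar j - yPart w j ≤ ‖w - zstar‖ := by
    intro w j
    have h1 : yPart zstar j - yPart w j = -((w - zstar) (Sum.inr j)) := by
      simp [yPart]
    rw [h1]
    exact (neg_le_abs _).trans (coord_abs_le_norm (w - zstar) (Sum.inr j))
  -- nonnegativity of the moduli
  have hLx0 : ∀ j : Fin m, 0 ≤ Lxbar g P zstar j δA := by
    intro j
    apply Real.sSup_nonneg
    rintro r ⟨w, hp, -, rfl⟩
    exact div_nonneg (le_max_right _ _) hp.le
  have hLy0 : ∀ j : Fin m, 0 ≤ Lybar P zstar j δA := by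
    intro j
    apply Real.sSup_nonneg
    rintro r ⟨w, hp, -, rfl⟩
    exact div_nonneg (le_max_right _ _) hp.le
  -- boundedness of the defining sets
  have hbddx : ∀ j : Fin m, BddAbove {r : ℝ | ∃ w : Zsp n m, 0 < pnorm P (w - zstar) ∧
      pnorm P (w - zstar) ≤ δA ∧
      r = max (g j (xPart w) - g j (xPart zstar)) 0 / pnorm P (w - zstar)} := by
    intro j
    obtain ⟨K, hK⟩ := convexOn_lipschitz_ball (hg j) x0 (δA / c)
    refine ⟨(K : ℝ) / c, ?_⟩
    rintro r ⟨w, hp0, hpt, rfl⟩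
    set p := pnorm P (w - zstar) with hpdef
    have h1 : ‖xPart w - x0‖ ≤ p / c := (hxpart w).trans (hcomp w)
    have hxball : xPart w ∈ Metric.closedBall x0 (δA / c) := by
      rw [Metric.mem_closedBall, dist_eq_norm]
      exact h1.trans (by gcongr)
    have h2 : g j (xPart w) - g j x0 ≤ (K : ℝ) * (p / c) :=
      (hK _ hxball).trans (mul_le_mul_of_nonneg_left h1 K.coe_nonneg)
    have h3 : max (g j (xPart w) - g j x0) 0 ≤ (K : ℝ) * (p / c) :=
      max_le h2 (mul_nonneg K.coe_nonneg (div_nonneg hp0.le hc.le))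
    rw [div_le_iff₀ hp0]
    calc max (g j (xPart w) - g j x0) 0 ≤ (K : ℝ) * (p / c) := h3
      _ = (K : ℝ) / c * p := by ring
  have hbddy : ∀ j : Fin m, BddAbove {r : ℝ | ∃ w : Zsp n m, 0 < pnorm P (w - zstar) ∧
      pnorm P (w - zstar) ≤ δA ∧
      r = max (yPart zstar j - yPart w j) 0 / pnorm P (w - zstar)} := by
    intro j
    refine ⟨1 / c, ?_⟩
    rintro r ⟨w, hp0, hpt, rfl⟩
    set p := pnorm P (w - zstar) with hpdef
    have h1 : yPart zstar j - yPart w j ≤ p / c := (hypart w j).trans (hcomp w)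
    have h3 : max (yPart zstar j - yPart w j) 0 ≤ p / c :=
      max_le h1 (div_nonneg hp0.le hc.le)
    rw [div_le_iff₀ hp0]
    calc max (yPart zstar j - yPart w j) 0 ≤ p / c := h3
      _ = 1 / c * p := by ring
  -- the key pointwise bounds
  have hgb : ∀ (j : Fin m) (w : Zsp n m), pnorm P (w - zstar) ≤ δA →
      g j (xPart w) ≤ g j x0 + Lxbar g P zstar j δA * pnorm P (w - zstar) := by
    intro j w hle
    rcases eq_or_lt_of_le (pnorm_nonneg' P (w - zstar)) with h0 | hpos
    · have hw : w = zstar := heqz w h0.symm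
      have hx : xPart w = x0 := by rw [hw]
      rw [hx, ← h0, mul_zero, add_zero]
    · have hr : max (g j (xPart w) - g j x0) 0 / pnorm P (w - zstar) ≤
          Lxbar g P zstar j δA := le_csSup (hbddx j) ⟨w, hpos, hle, rfl⟩
      have h2 : max (g j (xPart w) - g j x0) 0 ≤
          Lxbar g P zstar j δA * pnorm P (w - zstar) := (div_le_iff₀ hpos).mp hr
      have h3 : g j (xPart w) - g j x0 ≤ max (g j (xPart w) - g j x0) 0 := le_max_left _ _
      linarith
  have hyb : ∀ (j : Fin m) (w : Zsp n m), pnorm P (w - zstar) ≤ δA →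
      yPart zstar j - yPart w j ≤ Lybar P zstar j δA * pnorm P (w - zstar) := by
    intro j w hle
    rcases eq_or_lt_of_le (pnorm_nonneg' P (w - zstar)) with h0 | hpos
    · have hw : w = zstar := heqz w h0.symm
      rw [← h0, mul_zero, hw, sub_self]
    · have hr : max (yPart zstar j - yPart w j) 0 / pnorm P (w - zstar) ≤
          Lybar P zstar j δA := le_csSup (hbddy j) ⟨w, hpos, hle, rfl⟩
      have h2 : max (yPart zstar j - yPart w j) 0 ≤
          Lybar P zstar j δA * pnorm P (w - zstar) := (div_le_iff₀ hpos).mp hr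
      have h3 : yPart zstar j - yPart w j ≤ max (yPart zstar j - yPart w j) 0 := le_max_left _ _
      linarith
  -- consequences of the fixed-point equation
  have hkeyx : ∀ j : Fin m, g j x0 < 0 → Lxbar g P zstar j δA * δA ≤ -(g j x0) := by
    intro j hj
    rcases eq_or_lt_of_le (hLx0 j) with h0 | hpos
    · rw [← h0, zero_mul]; linarith
    · have h1 : ENNReal.ofReal δA ≤
          ENNReal.ofReal (-(g j x0)) / ENNReal.ofReal (Lxbar g P zstar j δA) := by
        rw [← hfix]
        exact le_trans (min_le_left _ _) (iInf₂_le j hj)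
      have h2 : ENNReal.ofReal δA * ENNReal.ofReal (Lxbar g P zstar j δA) ≤
          ENNReal.ofReal (-(g j x0)) :=
        (ENNReal.le_div_iff_mul_le (Or.inl (ENNReal.ofReal_pos.mpr hpos).ne')
          (Or.inl ENNReal.ofReal_ne_top)).mp h1
      rw [← ENNReal.ofReal_mul hδA.le] at h2
      have h3 : δA * Lxbar g P zstar j δA ≤ -(g j x0) :=
        (ENNReal.ofReal_le_ofReal_iff (by linarith)).mp h2
      linarith [mul_comm δA (Lxbar g P zstar j δA) ▸ h3]
  have hkeyy : ∀ j : Fin m, g j x0 = 0 → 0 < yPart zstar j →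
      Lybar P zstar j δA * δA ≤ yPart zstar j := by
    intro j hj hj'
    rcases eq_or_lt_of_le (hLy0 j) with h0 | hpos
    · rw [← h0, zero_mul]; linarith
    · have h1 : ENNReal.ofReal δA ≤
          ENNReal.ofReal (yPart zstar j) / ENNReal.ofReal (Lybar P zstar j δA) := by
        rw [← hfix]
        exact le_trans (min_le_right _ _) (iInf₂_le j ⟨hj, hj'⟩)
      have h2 : ENNReal.ofReal δA * ENNReal.ofReal (Lybar P zstar j δA) ≤
          ENNReal.ofReal (yPart zstar j) :=
        (ENNReal.le_div_iff_mul_le (Or.inl (ENNReal.ofReal_pos.mpr hpos).ne')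
          (Or.inl ENNReal.ofReal_ne_top)).mp h1
      rw [← ENNReal.ofReal_mul hδA.le] at h2
      have h3 : δA * Lybar P zstar j δA ≤ yPart zstar j :=
        (ENNReal.ofReal_le_ofReal_iff hj'.le).mp h2
      linarith [mul_comm δA (Lybar P zstar j δA) ▸ h3]
  constructor
  · -- Part 1
    intro θ hθ0 hθ1 w hw
    have hpnn := pnorm_nonneg' P (w - zstar)
    have hle : pnorm P (w - zstar) ≤ δA := hw.trans (by nlinarith)
    constructor
    · intro j hj
      have h1 := hgb j w hle
      have h2 : Lxbar g P zstar j δA * pnorm P (w - zstar) ≤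
          Lxbar g P zstar j δA * (θ * δA) := mul_le_mul_of_nonneg_left hw (hLx0 j)
      have h3 := hkeyx j hj
      nlinarith
    · intro j hj hj'
      have h1 := hyb j w hle
      have h2 : Lybar P zstar j δA * pnorm P (w - zstar) ≤
          Lybar P zstar j δA * (θ * δA) := mul_le_mul_of_nonneg_left hw (hLy0 j)
      have h3 := hkeyy j hj hj'
      nlinarith
  · -- Part 2
    intro w hw
    have hle : pnorm P (w - zstar) ≤ δA := hw.le
    constructor
    · intro j hj
      have h1 := hgb j w hle
      rcases eq_or_lt_of_le (hLx0 j) with h0 | hpos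
      · rw [← h0, zero_mul, add_zero] at h1
        linarith
      · have h2 : Lxbar g P zstar j δA * pnorm P (w - zstar) <
            Lxbar g P zstar j δA * δA := mul_lt_mul_of_pos_left hw hpos
        have h3 := hkeyx j hj
        linarith
    · intro j hj hj'
      have h1 := hyb j w hle
      rcases eq_or_lt_of_le (hLy0 j) with h0 | hpos
      · rw [← h0, zero_mul] at h1
        linarith
      · have h2 : Lybar P zstar j δA * pnorm P (w - zstar) <
            Lybar P zstar j δA * δA := mul_lt_mul_of_pos_left hw hpos
        have h3 := hkeyy j hj hj'
        linarith
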